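/- Let P, Q ∈ ℂ[x, y, y'] be coprime polynomials and X_α = ∂/∂x + y'∂/∂y + (6y² + α⁵x)∂/∂y'. If Q·X_α(P) - P·X_α(Q) + 12yQ² - P² = 0, then there exists a polynomial L with X_α(P) + 12yQ = LP and X_α(Q) + P = LQ. -/
import Mathlib


open MvPolynomial

noncomputable section

/-- Polynomials in the variables `x = X 0`, `y = X 1`, `y' = X 2`, `α = X 3`. -/
abbrev P4 : Type := MvPolynomial (Fin 4) ℂ

/-- The derivation `X_α = ∂/∂x + y'∂/∂y + (6y² + α⁵x)∂/∂y'` of `ℂ[x, y, y', α]`. -/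
def Xa (f : P4) : P4 :=
  pderiv 0 f + X 2 * pderiv 1 f + (6 * (X 1) ^ 2 + (X 3) ^ 5 * X 0) * pderiv 2 f

/-- Bézout step: if `P, Q` are coprime and
`Q·X_α(P) - P·X_α(Q) + 12yQ² - P² = 0`, then there is a polynomial `L` with
`X_α(P) + 12yQ = LP` and `X_α(Q) + P = LQ`. -/
theorem stmt13 (P Q : P4) (hPQ : IsRelPrime P Q)
    (h : Q * Xa P - P * Xa Q + 12 * X 1 * Q ^ 2 - P ^ 2 = 0) :
    ∃ L : P4, Xa P + 12 * X 1 * Q = L * P ∧ Xa Q + P = L * Q := by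
  have key : Q * (Xa P + 12 * X 1 * Q) = P * (Xa Q + P) := by linear_combination h
  have hQ0 : Q ≠ 0 := by
    rintro rfl
    have hX0 : Xa 0 = (0 : P4) := by simp [Xa]
    have hP : P = 0 := by
      have : P ^ 2 = 0 := by
        have := h
        rw [hX0] at this
        linear_combination -this
      exact pow_eq_zero_iff (n := 2) (by norm_num) |>.mp this
    subst hP
    exact not_isUnit_zero (hPQ dvd_rfl dvd_rfl)
  have hdvd : Q ∣ P * (Xa Q + P) := ⟨Xa P + 12 * X 1 * Q, key.symm⟩
  obtain ⟨L, hL⟩ := hPQ.symm.dvd_of_dvd_mul_left hdvd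
  refine ⟨L, ?_, by rw [hL, mul_comm]⟩
  apply mul_left_cancel₀ hQ0
  rw [key, hL]; ring
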